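/- arXiv:math/0610619 — 2 statements merged into one kernel-verified Lean document; each statement's English description precedes it below -/
import Mathlib

section
/- Existence of a pathological scalarly square-integrable process (Example 2.9). Let E be an infinite-dimensional separable real Hilbert space with inner product [·,·]. There exist a probability space (Ω, F, P) and a strongly measurable process φ : [0,1] × Ω → E such that: (i) for every x ∈ E, for P-almost every ω ∈ Ω, the function t ↦ [φ(t, ω), x] belongs to L²(0,1); and (ii) for P-almost every ω ∈ Ω, there exists x ∈ E such that the function t ↦ [φ(t, ω), x] does not belong to L²(0,1) (i.e., ∫₀¹ [φ(t, ω), x]² dt = ∞). -/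
open MeasureTheory

universe u

open MeasureTheory Set ENNReal NNReal

noncomputable section

namespace Patho

/-- The dyadic interval `(2^{-(n+1)}, 2^{-n}]`. -/
def In (n : ℕ) : Set ℝ := Set.Ioc ((2:ℝ)⁻¹ ^ (n+1)) ((2:ℝ)⁻¹ ^ n)

/-- The dyadic level of `t`. -/
def Nt (t : ℝ) : ℕ := Nat.log 2 ⌊t⁻¹⌋₊

lemma In_subset (n : ℕ) : In n ⊆ Set.Ioc (0:ℝ) 1 := by
  intro t ht
  exact ⟨lt_trans (by positivity) ht.1,
    ht.2.trans (pow_le_one₀ (by norm_num) (by norm_num))⟩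

lemma Nt_eq {n : ℕ} {t : ℝ} (ht : t ∈ In n) : Nt t = n := by
  obtain ⟨h1, h2⟩ := ht
  have ht0 : 0 < t := lt_trans (by positivity) h1
  have hl : (2:ℝ)^n ≤ t⁻¹ := by
    rw [le_inv_comm₀ (by positivity) ht0]
    simpa [inv_pow] using h2
  have hu : t⁻¹ < (2:ℝ)^(n+1) := by
    rw [inv_lt_comm₀ ht0 (by positivity)]
    simpa [inv_pow] using h1
  have hl' : 2^n ≤ ⌊t⁻¹⌋₊ := Nat.le_floor (by exact_mod_cast hl)
  have hu' : ⌊t⁻¹⌋₊ < 2^(n+1) := by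
    rw [Nat.floor_lt (by positivity)]
    exact_mod_cast hu
  exact Nat.log_eq_of_pow_le_of_lt_pow hl' hu'

lemma iUnion_In : (⋃ n, In n) = Set.Ioc (0:ℝ) 1 := by
  apply subset_antisymm
  · exact Set.iUnion_subset In_subset
  · intro t ht
    have h : ∃ k, (2:ℝ)⁻¹ ^ k < t := exists_pow_lt_of_lt_one ht.1 (by norm_num)
    classical
    let m := Nat.find h
    have hm : (2:ℝ)⁻¹ ^ m < t := Nat.find_spec h
    have hm0 : m ≠ 0 := by
      intro h0
      have := hm
      rw [h0] at this
      simp at this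
      linarith [ht.2]
    obtain ⟨n, hn⟩ : ∃ n, m = n + 1 := ⟨m - 1, (Nat.succ_pred_eq_of_pos (Nat.pos_of_ne_zero hm0)).symm⟩
    have hmin : ¬ ((2:ℝ)⁻¹ ^ n < t) := Nat.find_min h (by omega)
    exact Set.mem_iUnion.2 ⟨n, by rw [← hn]; exact hm, not_lt.mp hmin⟩

lemma In_disjoint : Pairwise (Function.onFun Disjoint In) := by
  have key : ∀ m n : ℕ, m < n → Disjoint (In m) (In n) := by
    intro m n hmn
    rw [In, In, Set.Ioc_disjoint_Ioc]
    have : (2:ℝ)⁻¹ ^ n ≤ (2:ℝ)⁻¹ ^ (m+1) :=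
      pow_le_pow_of_le_one (by norm_num) (by norm_num) hmn
    calc min ((2:ℝ)⁻¹ ^ m) ((2:ℝ)⁻¹ ^ n) ≤ (2:ℝ)⁻¹ ^ n := min_le_right _ _
    _ ≤ (2:ℝ)⁻¹ ^ (m+1) := this
    _ ≤ max ((2:ℝ)⁻¹ ^ (m+1)) ((2:ℝ)⁻¹ ^ (n+1)) := le_max_left _ _
  intro m n hmn
  rcases lt_or_gt_of_ne hmn with h | h
  · exact key m n h
  · exact (key n m h).symm

lemma measurableSet_In (n : ℕ) : MeasurableSet (In n) := measurableSet_Ioc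

lemma volume_In (n : ℕ) : volume (In n) = (2⁻¹ : ℝ≥0∞) ^ (n+1) := by
  rw [In, Real.volume_Ioc]
  have h : (2:ℝ)⁻¹ ^ n - (2:ℝ)⁻¹ ^ (n+1) = (2:ℝ)⁻¹ ^ (n+1) := by ring
  rw [h]
  rw [show ((2:ℝ)⁻¹ ^ (n+1)) = ((2:ℝ)⁻¹) ^ (n+1) from rfl,
    ENNReal.ofReal_pow (by norm_num)]
  congr 1
  rw [ENNReal.ofReal_inv_of_pos (by norm_num)]
  norm_num

/-- Lebesgue integral over `(0,1)` of a function constant on each dyadic interval. -/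
lemma key_lintegral (f : ℝ → ℝ≥0∞) (c : ℕ → ℝ≥0∞)
    (hf : ∀ n, ∀ t ∈ In n, f t = c n) :
    ∫⁻ t in Set.Ioo (0:ℝ) 1, f t = ∑' n, c n * (2⁻¹ : ℝ≥0∞) ^ (n+1) := by
  have h1 : volume.restrict (Set.Ioo (0:ℝ) 1) = volume.restrict (Set.Ioc (0:ℝ) 1) :=
    Measure.restrict_congr_set Ioo_ae_eq_Ioc
  rw [h1, ← iUnion_In, lintegral_iUnion measurableSet_In In_disjoint]
  congr 1
  funext n
  rw [setLIntegral_congr_fun (measurableSet_In n) (g := fun _ => c n) (hf n),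
    setLIntegral_const, volume_In]


/-- The `n`-th dyadic digit selector on `Ω = (0,1)`. -/
def dg (n : ℕ) (ω : ℝ) : ℕ := ⌊(2:ℝ)^n * ω⌋₊

lemma measurable_dg (n : ℕ) : Measurable (dg n) :=
  Nat.measurable_floor.comp ((measurable_const).mul measurable_id)

lemma meas_dg_le (n k : ℕ) :
    (volume.restrict (Set.Ioo (0:ℝ) 1)) (dg n ⁻¹' {k}) ≤ (2⁻¹ : ℝ≥0∞) ^ n := by
  rw [Measure.restrict_apply ((measurable_dg n) (measurableSet_singleton k))]
  have hsub : dg n ⁻¹' {k} ∩ Set.Ioo 0 1 ⊆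
      Set.Ico ((k:ℝ)/2^n) (((k:ℝ)+1)/2^n) := by
    rintro ω ⟨h1, h2⟩
    simp only [Set.mem_preimage, Set.mem_singleton_iff, dg] at h1
    have hω : (0:ℝ) < ω := h2.1
    have h0 : (0:ℝ) ≤ 2^n * ω := by positivity
    rw [Nat.floor_eq_iff (by exact_mod_cast h0)] at h1
    constructor
    · rw [div_le_iff₀ (by positivity)]
      linarith [h1.1]
    · rw [lt_div_iff₀ (by positivity)]
      push_cast at h1 ⊢
      linarith [h1.2]
  calc volume (dg n ⁻¹' {k} ∩ Set.Ioo 0 1)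
      ≤ volume (Set.Ico ((k:ℝ)/2^n) (((k:ℝ)+1)/2^n)) := measure_mono hsub
    _ = ENNReal.ofReal (((k:ℝ)+1)/2^n - (k:ℝ)/2^n) := Real.volume_Ico
    _ = (2⁻¹ : ℝ≥0∞) ^ n := by
        rw [show ((k:ℝ)+1)/2^n - (k:ℝ)/2^n = ((2:ℝ)⁻¹)^n by field_simp; rw [← mul_pow]; norm_num]
        rw [ENNReal.ofReal_pow (by norm_num)]
        congr 1
        rw [ENNReal.ofReal_inv_of_pos (by norm_num)]
        norm_num

lemma lintegral_comp_dg (n : ℕ) (g : ℕ → ℝ≥0∞) :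
    ∫⁻ ω in Set.Ioo (0:ℝ) 1, g (dg n ω) ≤ (2⁻¹ : ℝ≥0∞) ^ n * ∑' k, g k := by
  have hm : Measurable g := measurable_from_nat
  rw [← lintegral_map hm (measurable_dg n), lintegral_countable' _]
  calc ∑' k, g k * (Measure.map (dg n) (volume.restrict (Set.Ioo (0:ℝ) 1))) {k}
      ≤ ∑' k, g k * (2⁻¹ : ℝ≥0∞) ^ n := by
        apply ENNReal.tsum_le_tsum
        intro k
        apply mul_le_mul_right
        rw [Measure.map_apply (measurable_dg n) (measurableSet_singleton k)]
        exact meas_dg_le n k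
    _ = (2⁻¹ : ℝ≥0∞) ^ n * ∑' k, g k := by
        rw [ENNReal.tsum_mul_right, mul_comm]


lemma exists_orthonormal_seq (E : Type u) [NormedAddCommGroup E] [InnerProductSpace ℝ E]
    (hinf : ¬ FiniteDimensional ℝ E) : ∃ e : ℕ → E, Orthonormal ℝ e := by
  have b := Module.Basis.ofVectorSpace ℝ E
  have hInf : Infinite (Module.Basis.ofVectorSpaceIndex ℝ E) := by
    by_contra h
    rw [not_infinite_iff_finite] at h
    exact hinf (Module.Finite.of_basis b)
  let f : ℕ → E := b ∘ (Infinite.natEmbedding _)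
  have hf : LinearIndependent ℝ f :=
    b.linearIndependent.comp _ (Infinite.natEmbedding _).injective
  exact ⟨InnerProductSpace.gramSchmidtNormed ℝ f, InnerProductSpace.gramSchmidtNormed_orthonormal hf⟩

end Patho


open Set ENNReal NNReal Patho

/-- **Existence of a pathological scalarly square-integrable process** (Example 2.9).
For every infinite-dimensional separable real Hilbert space `E` there exist a
probability space `(Ω, P)` and a strongly measurable process `φ : [0,1] × Ω → E`
such that for every `x ∈ E` the scalar function `t ↦ ⟪φ(t,ω), x⟫` is in `L²(0,1)`
for a.e. `ω`, while for a.e. `ω` there exists `x ∈ E` for which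
`∫₀¹ ⟪φ(t,ω), x⟫² dt = ∞`. -/
theorem exists_pathological_scalarly_L2_process
    (E : Type u) [NormedAddCommGroup E] [InnerProductSpace ℝ E] [CompleteSpace E]
    [TopologicalSpace.SeparableSpace E] (hinf : ¬ FiniteDimensional ℝ E) :
    ∃ (Ω : Type) (_ : MeasurableSpace Ω) (P : Measure Ω), IsProbabilityMeasure P ∧
      ∃ φ : ℝ → Ω → E,
        StronglyMeasurable (fun q : ℝ × Ω => φ q.1 q.2) ∧
        (∀ x : E, ∀ᵐ ω ∂P,
          MemLp (fun t => (inner ℝ (φ t ω) x : ℝ)) 2 (volume.restrict (Set.Ioo (0:ℝ) 1))) ∧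
        (∀ᵐ ω ∂P, ∃ x : E,
          ∫⁻ t in Set.Ioo (0:ℝ) 1, ENNReal.ofReal ((inner ℝ (φ t ω) x : ℝ) ^ 2) = ⊤) := by
  classical
  haveI : SecondCountableTopology E := UniformSpace.secondCountable_of_separable E
  letI : MeasurableSpace E := borel E
  haveI : BorelSpace E := ⟨rfl⟩
  obtain ⟨e, he⟩ := exists_orthonormal_seq E hinf
  refine ⟨ℝ, inferInstance, volume.restrict (Set.Ioo (0:ℝ) 1), ⟨by simp⟩, ?_⟩
  set φ : ℝ → ℝ → E := fun t ω => Set.indicator (Set.Ioc (0:ℝ) 1)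
      (fun s => ((2:ℝ)^(Nt s)) • e (Nat.pair (Nt s) (dg (Nt s) ω))) t with hφ
  have phi_eq : ∀ (n : ℕ) (ω : ℝ), ∀ t ∈ In n,
      φ t ω = (2:ℝ)^n • e (Nat.pair n (dg n ω)) := by
    intro n ω t ht
    rw [hφ]
    simp only
    rw [Set.indicator_of_mem (In_subset n ht), Nt_eq ht]
  have hpair_inj : Function.Injective (fun p : ℕ × ℕ => Nat.pair p.1 p.2) := by
    intro p q hpq
    have := congrArg Nat.unpair hpq
    simpa [Nat.unpair_pair, Prod.ext_iff] using this
  -- strong measurability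
  have hsm : StronglyMeasurable (fun q : ℝ × ℝ => φ q.1 q.2) := by
    apply Measurable.stronglyMeasurable
    have hNt : Measurable Nt :=
      measurable_from_nat.comp (Nat.measurable_floor.comp measurable_inv)
    have h1 : Measurable fun q : ℝ × ℝ => Nt q.1 := hNt.comp measurable_fst
    have h2 : Measurable fun q : ℝ × ℝ => dg (Nt q.1) q.2 := by
      apply Nat.measurable_floor.comp
      exact (measurable_from_nat.comp h1 :
        Measurable fun q : ℝ × ℝ => (2:ℝ) ^ (Nt q.1)).mul measurable_snd
    have hidx : Measurable (fun q : ℝ × ℝ => Nat.pair (Nt q.1) (dg (Nt q.1) q.2)) := by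
      apply measurable_to_countable'
      intro m
      have hpre : (fun q : ℝ × ℝ => Nat.pair (Nt q.1) (dg (Nt q.1) q.2)) ⁻¹' {m} =
          ((fun q : ℝ × ℝ => Nt q.1) ⁻¹' {m.unpair.1}) ∩
          ((fun q : ℝ × ℝ => dg (Nt q.1) q.2) ⁻¹' {m.unpair.2}) := by
        ext q
        simp only [Set.mem_preimage, Set.mem_singleton_iff, Set.mem_inter_iff]
        constructor
        · intro h
          rw [← h, Nat.unpair_pair]
          exact ⟨rfl, rfl⟩
        · rintro ⟨ha, hb⟩
          rw [hb, ha, Nat.pair_unpair]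
      rw [hpre]
      exact (h1 (measurableSet_singleton _)).inter (h2 (measurableSet_singleton _))
    have hJ : Measurable (fun q : ℝ × ℝ =>
        ((2:ℝ)^((Nat.pair (Nt q.1) (dg (Nt q.1) q.2)).unpair.1)) •
          e (Nat.pair (Nt q.1) (dg (Nt q.1) q.2))) :=
      (measurable_from_nat (f := fun m : ℕ => ((2:ℝ)^(m.unpair.1)) • e m)).comp hidx
    have heq : (fun q : ℝ × ℝ => φ q.1 q.2) =
        Set.indicator (Set.Ioc (0:ℝ) 1 ×ˢ (Set.univ : Set ℝ))
          (fun q : ℝ × ℝ =>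
            ((2:ℝ)^((Nat.pair (Nt q.1) (dg (Nt q.1) q.2)).unpair.1)) •
              e (Nat.pair (Nt q.1) (dg (Nt q.1) q.2))) := by
      funext q
      by_cases h : q.1 ∈ Set.Ioc (0:ℝ) 1
      · rw [hφ]
        simp only
        rw [Set.indicator_of_mem h, Set.indicator_of_mem (by simp [h]), Nat.unpair_pair]
      · rw [hφ]
        simp only
        rw [Set.indicator_of_notMem h, Set.indicator_of_notMem (by simp [h])]
    rw [heq]
    exact hJ.indicator (measurableSet_Ioc.prod MeasurableSet.univ)
  refine ⟨φ, hsm, ?_, ?_⟩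
  · -- (i) scalarly square integrable a.s.
    intro x
    set cx : ℕ → ℝ := fun j => (inner ℝ (e j) x : ℝ) with hcx
    have inner_phi : ∀ (n : ℕ) (ω : ℝ), ∀ t ∈ In n,
        (inner ℝ (φ t ω) x : ℝ) = (2:ℝ)^n * cx (Nat.pair n (dg n ω)) := by
      intro n ω t ht
      rw [phi_eq n ω t ht, real_inner_smul_left]
    set S : ℝ → ℝ≥0∞ := fun ω => ∑' n,
        ENNReal.ofReal (((2:ℝ)^n * cx (Nat.pair n (dg n ω)))^2) * (2⁻¹ : ℝ≥0∞)^(n+1)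
      with hS
    have hg_meas : ∀ n : ℕ, Measurable (fun ω : ℝ =>
        ENNReal.ofReal (((2:ℝ)^n * cx (Nat.pair n (dg n ω)))^2)) := fun n =>
      (measurable_from_nat
        (f := fun k : ℕ => ENNReal.ofReal (((2:ℝ)^n * cx (Nat.pair n k))^2))).comp
        (measurable_dg n)
    have hterm_meas : ∀ n : ℕ, Measurable (fun ω : ℝ =>
        ENNReal.ofReal (((2:ℝ)^n * cx (Nat.pair n (dg n ω)))^2) * (2⁻¹ : ℝ≥0∞)^(n+1)) :=
      fun n => (hg_meas n).mul_const _
    have hS_meas : Measurable S := Measurable.ennreal_tsum hterm_meas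
    -- pointwise constant computation
    have hpt : ∀ (n : ℕ) (c : ℝ),
        (2⁻¹ : ℝ≥0∞)^n * ENNReal.ofReal (((2:ℝ)^n * c)^2) * (2⁻¹ : ℝ≥0∞)^(n+1) =
          2⁻¹ * ENNReal.ofReal (c^2) := by
      intro n c
      have h1 : ((2:ℝ)^n * c)^2 = (4:ℝ)^n * c^2 := by
        rw [mul_pow, ← pow_mul, mul_comm n 2, pow_mul]
        norm_num
      rw [h1, ENNReal.ofReal_mul (by positivity),
        ENNReal.ofReal_pow (by norm_num : (0:ℝ) ≤ 4)]
      have h4 : ENNReal.ofReal (4:ℝ) = (4:ℝ≥0∞) := by norm_num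
      rw [h4]
      have hkey : (2⁻¹ : ℝ≥0∞)^n * ((4:ℝ≥0∞)^n * ENNReal.ofReal (c^2)) * (2⁻¹ : ℝ≥0∞)^(n+1)
          = ((2⁻¹ * 4 * 2⁻¹ : ℝ≥0∞))^n * (2⁻¹ * ENNReal.ofReal (c^2)) := by
        rw [mul_pow, mul_pow]
        ring
      rw [hkey]
      have h2 : (2⁻¹ * 4 * 2⁻¹ : ℝ≥0∞) = 1 := by
        rw [show (4:ℝ≥0∞) = 2*2 by norm_num, ← mul_assoc,
          ENNReal.inv_mul_cancel two_ne_zero ENNReal.ofNat_ne_top, one_mul,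
          ENNReal.mul_inv_cancel two_ne_zero ENNReal.ofNat_ne_top]
      rw [h2, one_pow, one_mul]
    have hS_int : ∫⁻ ω in Set.Ioo (0:ℝ) 1, S ω ≠ ⊤ := by
      rw [hS]
      rw [lintegral_tsum (fun n => (hterm_meas n).aemeasurable)]
      have hbound : ∀ n : ℕ,
          (∫⁻ ω in Set.Ioo (0:ℝ) 1,
            ENNReal.ofReal (((2:ℝ)^n * cx (Nat.pair n (dg n ω)))^2) * (2⁻¹ : ℝ≥0∞)^(n+1)) ≤
          ∑' k, 2⁻¹ * ENNReal.ofReal (cx (Nat.pair n k)^2) := by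
        intro n
        rw [lintegral_mul_const _ (hg_meas n)]
        calc (∫⁻ ω in Set.Ioo (0:ℝ) 1,
              ENNReal.ofReal (((2:ℝ)^n * cx (Nat.pair n (dg n ω)))^2)) * (2⁻¹ : ℝ≥0∞)^(n+1)
            ≤ ((2⁻¹ : ℝ≥0∞)^n * ∑' k, ENNReal.ofReal (((2:ℝ)^n * cx (Nat.pair n k))^2)) *
              (2⁻¹ : ℝ≥0∞)^(n+1) := mul_le_mul_left (lintegral_comp_dg n _) _
          _ = ∑' k, 2⁻¹ * ENNReal.ofReal (cx (Nat.pair n k)^2) := by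
              rw [← ENNReal.tsum_mul_left, ← ENNReal.tsum_mul_right]
              congr 1
              funext k
              exact hpt n (cx (Nat.pair n k))
      have hfin : (∑' n, ∑' k, 2⁻¹ * ENNReal.ofReal (cx (Nat.pair n k)^2)) ≠ ⊤ := by
        have hsummable : Summable (fun j => cx j ^ 2) := by
          have h := he.inner_products_summable (x := x)
          simpa [hcx, Real.norm_eq_abs, sq_abs] using h
        have hbessel : (∑' j, ENNReal.ofReal (cx j ^ 2)) ≤ ENNReal.ofReal (‖x‖^2) := by
          rw [← ENNReal.ofReal_tsum_of_nonneg (fun j => sq_nonneg _) hsummable]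
          apply ENNReal.ofReal_le_ofReal
          have h := he.tsum_inner_products_le x
          simpa [hcx, Real.norm_eq_abs, sq_abs] using h
        have hle : (∑' n, ∑' k, 2⁻¹ * ENNReal.ofReal (cx (Nat.pair n k)^2)) ≤
            2⁻¹ * ENNReal.ofReal (‖x‖^2) := by
          calc (∑' n, ∑' k, 2⁻¹ * ENNReal.ofReal (cx (Nat.pair n k)^2))
              = 2⁻¹ * ∑' (n : ℕ), ∑' (k : ℕ), ENNReal.ofReal (cx (Nat.pair n k)^2) := by
                simp_rw [ENNReal.tsum_mul_left]
            _ ≤ 2⁻¹ * ∑' j, ENNReal.ofReal (cx j ^ 2) := by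
                apply mul_le_mul_right
                rw [← ENNReal.tsum_prod]
                exact tsum_comp_le_tsum_of_injective hpair_inj
                  (fun j => ENNReal.ofReal (cx j ^ 2))
            _ ≤ 2⁻¹ * ENNReal.ofReal (‖x‖^2) := mul_le_mul_right hbessel _
        exact ne_top_of_le_ne_top
          (ENNReal.mul_ne_top (by norm_num) ENNReal.ofReal_ne_top) hle
      exact ne_top_of_le_ne_top hfin (ENNReal.tsum_le_tsum hbound)
    have hae : ∀ᵐ ω ∂(volume.restrict (Set.Ioo (0:ℝ) 1)), S ω < ⊤ := ae_lt_top hS_meas hS_int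
    filter_upwards [hae] with ω hω
    have h1 : StronglyMeasurable (fun t => φ t ω) :=
      hsm.comp_measurable (measurable_id.prodMk measurable_const)
    have hmeas1 : AEStronglyMeasurable (fun t => (inner ℝ (φ t ω) x : ℝ))
        (volume.restrict (Set.Ioo (0:ℝ) 1)) :=
      ((Continuous.inner continuous_id (continuous_const : Continuous fun _ : E => x)
        ).comp_stronglyMeasurable h1).aestronglyMeasurable
    rw [memLp_two_iff_integrable_sq hmeas1]
    constructor
    · simpa [sq, Pi.mul_def] using hmeas1.mul hmeas1
    · rw [hasFiniteIntegral_iff_ofReal (ae_of_all _ (fun t => sq_nonneg _))]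
      have hQ : (∫⁻ t in Set.Ioo (0:ℝ) 1,
          ENNReal.ofReal ((inner ℝ (φ t ω) x : ℝ)^2)) = S ω := by
        apply key_lintegral
        intro n t ht
        rw [inner_phi n ω t ht]
      rw [hQ]
      exact hω
  · -- (ii) pathological direction for every ω
    apply ae_of_all
    intro ω
    set gp : ℕ → ℕ := fun m => Nat.pair m (dg m ω) with hgp
    have hgp_inj : Function.Injective gp := by
      intro a b hab
      have := congrArg (fun m => m.unpair.1) hab
      simpa [hgp, Nat.unpair_pair] using this
    set b : ℕ → ℝ := fun m => Real.sqrt ((2:ℝ)⁻¹^m / (m+1)) with hb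
    have hb_nonneg : ∀ m, 0 ≤ b m := fun m => Real.sqrt_nonneg _
    have hb_sq : ∀ m, b m ^ 2 = (2:ℝ)⁻¹^m / (m+1) := by
      intro m
      rw [hb]
      exact Real.sq_sqrt (by positivity)
    have hb_le : ∀ m, b m ≤ (Real.sqrt 2⁻¹)^m := by
      intro m
      have h1 : b m ≤ Real.sqrt ((2:ℝ)⁻¹^m) := by
        apply Real.sqrt_le_sqrt
        rw [div_le_iff₀ (by positivity)]
        nlinarith [pow_nonneg (by norm_num : (0:ℝ) ≤ 2⁻¹) m, Nat.cast_nonneg (α := ℝ) m]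
      have h2 : Real.sqrt ((2:ℝ)⁻¹^m) = (Real.sqrt 2⁻¹)^m := by
        rw [show ((2:ℝ)⁻¹^m) = ((Real.sqrt 2⁻¹)^m)^2 by
          rw [← pow_mul, mul_comm m 2, pow_mul, Real.sq_sqrt (by norm_num)]]
        exact Real.sqrt_sq (by positivity)
      rw [← h2]; exact h1
    have hsum : Summable (fun m => b m • e (gp m)) := by
      apply Summable.of_norm_bounded (g := fun m => (Real.sqrt 2⁻¹)^m)
        (summable_geometric_of_lt_one (Real.sqrt_nonneg _)
          (by rw [show (1:ℝ) = Real.sqrt 1 by rw [Real.sqrt_one]]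
              exact Real.sqrt_lt_sqrt (by norm_num) (by norm_num)))
      intro m
      rw [norm_smul, he.1 (gp m), mul_one, Real.norm_eq_abs, abs_of_nonneg (hb_nonneg m)]
      exact hb_le m
    refine ⟨∑' m, b m • e (gp m), ?_⟩
    set x : E := ∑' m, b m • e (gp m) with hx
    have hinner : ∀ n : ℕ, (inner ℝ (e (gp n)) x : ℝ) = b n := by
      intro n
      rw [hx]
      have hmap : (inner ℝ (e (gp n)) (∑' m, b m • e (gp m)) : ℝ) =
          ∑' m, b m * (inner ℝ (e (gp n)) (e (gp m)) : ℝ) := by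
        have := (innerSL ℝ (e (gp n))).map_tsum hsum
        simpa using this
      rw [hmap]
      have horth := orthonormal_iff_ite.mp he
      have hterm : ∀ m : ℕ, b m * (inner ℝ (e (gp n)) (e (gp m)) : ℝ) =
          if m = n then b n else 0 := by
        intro m
        rw [horth (gp n) (gp m)]
        by_cases h : m = n
        · simp [h]
        · rw [if_neg (fun hc => h (hgp_inj hc.symm))]
          simp [h]
      rw [tsum_congr hterm, tsum_eq_single n (fun m hm => if_neg hm)]
      simp
    have hval : ∀ (n : ℕ), ∀ t ∈ In n, (inner ℝ (φ t ω) x : ℝ) = (2:ℝ)^n * b n := by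
      intro n t ht
      rw [phi_eq n ω t ht, real_inner_smul_left, hinner n]
    have hQ : (∫⁻ t in Set.Ioo (0:ℝ) 1,
        ENNReal.ofReal ((inner ℝ (φ t ω) x : ℝ)^2)) =
        ∑' n, ENNReal.ofReal (((2:ℝ)^n * b n)^2) * (2⁻¹ : ℝ≥0∞)^(n+1) := by
      apply key_lintegral
      intro n t ht
      rw [hval n t ht]
    rw [hQ]
    -- each term equals 2⁻¹ * ofReal (1/(n+1))
    have hterm : ∀ n : ℕ, ENNReal.ofReal (((2:ℝ)^n * b n)^2) * (2⁻¹ : ℝ≥0∞)^(n+1) =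
        2⁻¹ * ENNReal.ofReal (1/((n:ℝ)+1)) := by
      intro n
      have h1 : ((2:ℝ)^n * b n)^2 = (2:ℝ)^n * (1/((n:ℝ)+1)) := by
        rw [mul_pow, hb_sq n,
          show ((2:ℝ)^n)^2 = (2:ℝ)^n * (2:ℝ)^n from by ring]
        calc (2:ℝ)^n * (2:ℝ)^n * ((2:ℝ)⁻¹^n/((n:ℝ)+1))
            = ((2:ℝ)^n * ((2:ℝ) * (2:ℝ)⁻¹)^n) * (1/((n:ℝ)+1)) := by
              rw [mul_pow]; ring
          _ = (2:ℝ)^n * (1/((n:ℝ)+1)) := by norm_num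
      rw [h1, ENNReal.ofReal_mul (by positivity),
        ENNReal.ofReal_pow (by norm_num : (0:ℝ) ≤ 2)]
      have h4 : ENNReal.ofReal (2:ℝ) = (2:ℝ≥0∞) := by norm_num
      rw [h4]
      have hkey : (2:ℝ≥0∞)^n * ENNReal.ofReal (1/((n:ℝ)+1)) * (2⁻¹ : ℝ≥0∞)^(n+1)
          = ((2 * 2⁻¹ : ℝ≥0∞))^n * (2⁻¹ * ENNReal.ofReal (1/((n:ℝ)+1))) := by
        rw [mul_pow]
        ring
      rw [hkey, ENNReal.mul_inv_cancel two_ne_zero ENNReal.ofNat_ne_top, one_pow, one_mul]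
    rw [tsum_congr hterm, ENNReal.tsum_mul_left]
    have hdiv : (∑' n : ℕ, ENNReal.ofReal (1/((n:ℝ)+1))) = ⊤ := by
      by_contra h
      have h1 : Summable (fun n : ℕ => Real.toNNReal (1/((n:ℝ)+1))) := by
        apply ENNReal.tsum_coe_ne_top_iff_summable.1
        convert h using 2
        rfl
      have h2 : Summable (fun n : ℕ => 1/((n:ℝ)+1)) := by
        have := NNReal.summable_coe.2 h1
        refine this.congr ?_
        intro n
        rw [Real.coe_toNNReal _ (by positivity)]
      have h2' : Summable (fun n : ℕ => 1/(((n+1 : ℕ)):ℝ)) := by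
        refine h2.congr fun n => ?_
        push_cast
        ring
      exact Real.not_summable_one_div_natCast
        ((_root_.summable_nat_add_iff 1).1 h2')
    rw [hdiv, ENNReal.mul_top (by norm_num)]
end
end

section
/- Finite-dimensional subspaces are almost isometrically recovered by finite-codimensional quotients (Step 1 in the proof of Theorem 3.6). Let E be a real Banach space and let (x_i*)_{i≥1} be a sequence in the closed unit ball of the dual space E* that is norm-dense in the closed unit ball of E*. For n ≥ 1 set F_n := ∩_{i=1}^n ker(x_i*), a closed linear subspace of E, and let Q_n : E → E/F_n denote the quotient map onto the quotient normed space E/F_n. Then for every finite-dimensional linear subspace G of E and every ε > 0 there exists an index N ≥ 1 such that ‖x‖ ≤ (1 + ε) ‖Q_N x‖_{E/F_N} for all x ∈ G. -/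
open Finset

universe u

/-- Auxiliary: a functional of norm ≤ 1 vanishing on `S` is dominated by the quotient norm. -/
lemma aux_le_quotient_norm {E : Type u} [NormedAddCommGroup E] [NormedSpace ℝ E]
    (S : Submodule ℝ E) (f : E →L[ℝ] ℝ) (hf : ‖f‖ ≤ 1)
    (hS : ∀ y ∈ S, f y = 0) (z : E) :
    f z ≤ ‖(Submodule.Quotient.mk z : E ⧸ S)‖ := by
  by_contra h
  push_neg at h
  obtain ⟨m, hm, hmlt⟩ := Submodule.Quotient.norm_mk_lt
    (Submodule.Quotient.mk z : E ⧸ S) (show (0:ℝ) < f z - ‖(Submodule.Quotient.mk z : E ⧸ S)‖ by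
      linarith)
  have hzm : z - m ∈ S := (Submodule.Quotient.eq S).mp hm.symm
  have hfzm : f (z - m) = 0 := hS _ hzm
  have : f z = f m := by
    have := f.map_sub z m
    rw [hfzm] at this
    linarith
  have hbound : f m ≤ ‖m‖ := by
    calc f m ≤ ‖f m‖ := le_abs_self _
    _ ≤ ‖f‖ * ‖m‖ := f.le_opNorm m
    _ ≤ 1 * ‖m‖ := by
        have : (0:ℝ) ≤ ‖m‖ := norm_nonneg _
        nlinarith
    _ = ‖m‖ := one_mul _
  linarith

/-- **Finite-dimensional subspaces are almost isometrically recovered by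
finite-codimensional quotients** (Step 1 in the proof of Theorem 3.6). If
`(x_i*)_{i≥1}` is norm-dense in the closed unit ball of `E*` and
`F_n = ∩_{i=1}^n ker x_i*`, then for every finite-dimensional subspace `G ⊆ E` and
every `ε > 0` there is `N ≥ 1` with `‖x‖ ≤ (1+ε) ‖Q_N x‖` for all `x ∈ G`, where
`Q_N : E → E/F_N` is the quotient map. -/
theorem finite_dim_quotient_almost_isometry
    (E : Type u) [NormedAddCommGroup E] [NormedSpace ℝ E]
    (x : ℕ → E →L[ℝ] ℝ)
    (hx_ball : ∀ i, 1 ≤ i → ‖x i‖ ≤ 1)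
    (hx_dense : ∀ f : E →L[ℝ] ℝ, ‖f‖ ≤ 1 → ∀ δ : ℝ, 0 < δ → ∃ i, 1 ≤ i ∧ ‖f - x i‖ < δ)
    (G : Submodule ℝ E) (hG : FiniteDimensional ℝ G)
    (ε : ℝ) (hε : 0 < ε) :
    ∃ N : ℕ, 1 ≤ N ∧ ∀ v : E, v ∈ G →
      ‖v‖ ≤ (1 + ε) *
        ‖(Submodule.Quotient.mk v :
          E ⧸ (⨅ i ∈ Finset.Icc 1 N, LinearMap.ker (x i : E →ₗ[ℝ] ℝ)))‖ := by
  classical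
  have h1ε : (0:ℝ) < 1 + ε := by linarith
  set δ : ℝ := ε / (2 * (1 + ε)) with hδdef
  have hδ : 0 < δ := by positivity
  -- For each unit vector u of G, pick an index giving an almost-norming functional.
  have key : ∀ u : G, ‖(u : E)‖ = 1 →
      ∃ i, 1 ≤ i ∧ ∀ w : E, 1 - δ - ‖w - (u : E)‖ ≤ x i w := by
    intro u hu
    have hune : (u : E) ≠ 0 := by
      intro h; rw [h, norm_zero] at hu; norm_num at hu
    obtain ⟨f, hf1, hfu⟩ := exists_dual_vector ℝ (u : E) (norm_ne_zero_iff.mpr hune)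
    obtain ⟨i, hi1, hfi⟩ := hx_dense f (le_of_eq hf1) δ hδ
    refine ⟨i, hi1, fun w => ?_⟩
    have h1 : x i (u : E) ≥ 1 - δ := by
      have h2 : ‖f (u : E) - x i (u : E)‖ ≤ ‖f - x i‖ * ‖(u : E)‖ :=
        (f - x i).le_opNorm (u : E)
      rw [hu, mul_one] at h2
      have h3 : |f (u : E) - x i (u : E)| < δ := lt_of_le_of_lt h2 hfi
      have h4 := abs_lt.mp h3
      rw [hfu, hu] at h4
      push_cast at h4
      linarith [h4.1, h4.2]
    have h5 : ‖x i (w - (u : E))‖ ≤ ‖x i‖ * ‖w - (u : E)‖ := (x i).le_opNorm _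
    have h6 : |x i (w - (u : E))| ≤ ‖w - (u : E)‖ := by
      have := hx_ball i hi1
      have hn : (0:ℝ) ≤ ‖w - (u : E)‖ := norm_nonneg _
      calc |x i (w - (u : E))| ≤ ‖x i‖ * ‖w - (u : E)‖ := h5
      _ ≤ 1 * ‖w - (u : E)‖ := by nlinarith
      _ = _ := one_mul _
    have h7 : x i w = x i (u : E) + x i (w - (u : E)) := by
      have := (x i).map_sub w (u : E)
      linarith
    have h8 := abs_le.mp h6
    linarith [h8.1]
  -- choice functions on the unit sphere of G
  set S : Set G := Metric.sphere (0 : G) 1 with hSdef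
  have hmem : ∀ u : G, u ∈ S → ‖(u : E)‖ = 1 := by
    intro u hu
    have : ‖u‖ = 1 := by simpa [hSdef] using hu
    simpa using this
  choose idx hidx1 hidx2 using fun (u : S) => key u (hmem u u.2)
  -- compactness of the sphere
  have hScompact : IsCompact S := isCompact_sphere (0 : G) 1
  have hcover : S ⊆ ⋃ u : S, Metric.ball (u : G) δ := by
    intro u hu
    exact Set.mem_iUnion.mpr ⟨⟨u, hu⟩, by simpa using hδ⟩
  obtain ⟨t, ht⟩ := hScompact.elim_finite_subcover
    (fun u : S => Metric.ball (u : G) δ) (fun _ => Metric.isOpen_ball) hcover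
  refine ⟨max 1 (t.sup idx), le_max_left _ _, ?_⟩
  set N := max 1 (t.sup idx) with hNdef
  set F : Submodule ℝ E := ⨅ i ∈ Finset.Icc 1 N, LinearMap.ker (x i : E →ₗ[ℝ] ℝ) with hFdef
  intro v hv
  rcases eq_or_ne v 0 with rfl | hvne
  · simp
  -- the normalized vector
  have hvnorm : (0:ℝ) < ‖v‖ := norm_pos_iff.mpr hvne
  set w : E := ‖v‖⁻¹ • v with hwdef
  have hwG : w ∈ G := G.smul_mem _ hv
  have hwnorm : ‖w‖ = 1 := by
    rw [hwdef, norm_smul, norm_inv, norm_norm, inv_mul_cancel₀ (ne_of_gt hvnorm)]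
  set u0 : G := ⟨w, hwG⟩ with hu0def
  have hu0S : u0 ∈ S := by
    simp only [hSdef, Metric.mem_sphere, dist_zero_right]
    simpa using hwnorm
  obtain ⟨c, hct, hcball⟩ := Set.mem_iUnion₂.mp (ht hu0S)
  have hdist : ‖w - ((c : G) : E)‖ < δ := by
    have h : dist u0 (c : G) < δ := hcball
    rw [dist_eq_norm] at h
    have hcoe : ‖u0 - (c : G)‖ = ‖w - ((c : G) : E)‖ := by
      simp [hu0def]
    rwa [hcoe] at h
  -- the functional x (idx c) almost norms w
  have hxw : 1 - 2 * δ ≤ x (idx c) w := by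
    have := hidx2 c w
    linarith [hdist]
  -- idx c ∈ Icc 1 N
  have hidxN : idx c ∈ Finset.Icc 1 N := by
    simp only [Finset.mem_Icc]
    exact ⟨hidx1 c, le_max_of_le_right (Finset.le_sup hct)⟩
  -- x (idx c) vanishes on F
  have hvanish : ∀ y ∈ F, x (idx c) y = 0 := by
    intro y hy
    have : y ∈ LinearMap.ker (x (idx c) : E →ₗ[ℝ] ℝ) := by
      rw [hFdef] at hy
      exact (Submodule.mem_iInf _).mp ((Submodule.mem_iInf _).mp hy (idx c)) hidxN
    exact this
  have hquot : x (idx c) w ≤ ‖(Submodule.Quotient.mk w : E ⧸ F)‖ :=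
    aux_le_quotient_norm F (x (idx c)) (hx_ball _ (hidx1 c)) hvanish w
  -- relate v and w quotient norms: ‖mk v‖ ≥ x (idx c) v = ‖v‖ * x (idx c) w
  have hxv : x (idx c) v = ‖v‖ * x (idx c) w := by
    rw [hwdef, map_smul, smul_eq_mul, ← mul_assoc, mul_inv_cancel₀ (ne_of_gt hvnorm), one_mul]
  have hquotv : x (idx c) v ≤ ‖(Submodule.Quotient.mk v : E ⧸ F)‖ :=
    aux_le_quotient_norm F (x (idx c)) (hx_ball _ (hidx1 c)) hvanish v
  -- conclude
  have hval : 1 - 2 * δ = 1 / (1 + ε) := by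
    have hne : (1 + ε) ≠ 0 := ne_of_gt h1ε
    rw [hδdef, mul_div_assoc', eq_div_iff hne, sub_mul,
      div_mul_eq_mul_div,
      show (2 : ℝ) * ε * (1 + ε) = ε * (2 * (1 + ε)) by ring,
      mul_div_assoc, div_self (by positivity : (2 : ℝ) * (1 + ε) ≠ 0), mul_one]
    ring
  have h2δ : 1 - 2 * δ = 1 / (1 + ε) := hval
  have hlow : ‖v‖ * (1 / (1 + ε)) ≤ ‖(Submodule.Quotient.mk v : E ⧸ F)‖ := by
    calc ‖v‖ * (1 / (1 + ε)) = ‖v‖ * (1 - 2 * δ) := by rw [h2δ]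
    _ ≤ ‖v‖ * x (idx c) w := by nlinarith
    _ = x (idx c) v := hxv.symm
    _ ≤ _ := hquotv
  have hmul := mul_le_mul_of_nonneg_left hlow (le_of_lt h1ε)
  have heq : (1 + ε) * (‖v‖ * (1 / (1 + ε))) = ‖v‖ := by field_simp
  linarith
end
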